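/- Let X(t) be a solution of the β-polygon flow with β > 0 and let Q ∈ ℂ, with Q = (Q,...,Q) the corresponding constant polygon. Let α = β + 2. Then the α-norm ‖X(t) - Q‖_α = (∑_{k=0}^{N-1} |X_k(t) - Q|^α)^{1/α} is nonincreasing in t. -/

import Mathlib

/-- The right-hand side of the β-polygon flow:
`(M_X X)_j = l_j^β (X_{j+1} - X_j) + l_{j-1}^β (X_{j-1} - X_j)` with `l_j = ‖X_{j+1} - X_j‖`. -/
noncomputable def flowRHS {N : ℕ} [NeZero N] (β : ℝ) (X : ZMod N → ℂ) (j : ZMod N) : ℂ :=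
  ((‖X (j + 1) - X j‖ ^ β : ℝ) : ℂ) * (X (j + 1) - X j)
    + ((‖X (j - 1) - X j‖ ^ β : ℝ) : ℂ) * (X (j - 1) - X j)

open scoped RealInnerProductSpace

/-- Derivative of `t ↦ ‖u t‖ ^ α` for `α ≥ 2`. -/
lemma myHasDerivAt_norm_rpow {u : ℝ → ℂ} {u' : ℂ} {t : ℝ} (hu : HasDerivAt u u' t)
    {α : ℝ} (hα : 2 ≤ α) :
    HasDerivAt (fun s => ‖u s‖ ^ α) (α * ‖u t‖ ^ (α - 2) * ⟪u', u t⟫) t := by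
  have hg : HasDerivAt (fun s => ⟪u s, u s⟫) (2 * ⟪u', u t⟫) t := by
    have := HasDerivAt.inner ℝ hu hu
    simpa [real_inner_comm, two_mul] using this
  have hp : HasDerivAt (fun y : ℝ => y ^ (α / 2))
      ((α / 2) * (⟪u t, u t⟫) ^ (α / 2 - 1)) (⟪u t, u t⟫) :=
    Real.hasDerivAt_rpow_const (Or.inr (by linarith))
  have hc := hp.comp t hg
  have key : ∀ x : ℂ, (⟪x, x⟫) ^ (α / 2) = ‖x‖ ^ α := by
    intro x
    rw [real_inner_self_eq_norm_sq, ← Real.rpow_natCast ‖x‖ 2,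
      ← Real.rpow_mul (norm_nonneg x)]
    ring_nf
  have key2 : (⟪u t, u t⟫) ^ (α / 2 - 1) = ‖u t‖ ^ (α - 2) := by
    rw [real_inner_self_eq_norm_sq, ← Real.rpow_natCast ‖u t‖ 2,
      ← Real.rpow_mul (norm_nonneg (u t))]
    ring_nf
  have hc' : HasDerivAt (fun s => ‖u s‖ ^ α)
      (α / 2 * (⟪u t, u t⟫) ^ (α / 2 - 1) * (2 * ⟪u', u t⟫)) t := by
    simpa only [Function.comp_def, key] using hc
  convert hc' using 1
  rw [key2]; ring

/-- The key pairwise inequality. -/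
lemma pair_ineq {β : ℝ} (hβ : 0 ≤ β) (a b : ℂ) :
    ‖a‖ ^ β * ⟪b - a, a⟫ + ‖b‖ ^ β * ⟪a - b, b⟫ ≤ 0 := by
  have hI : ⟪a, b⟫ ≤ ‖a‖ * ‖b‖ := real_inner_le_norm a b
  have e1 : ⟪b - a, a⟫ = ⟪a, b⟫ - ‖a‖ ^ 2 := by
    rw [inner_sub_left, real_inner_self_eq_norm_sq, real_inner_comm]
  have e2 : ⟪a - b, b⟫ = ⟪a, b⟫ - ‖b‖ ^ 2 := by
    rw [inner_sub_left, real_inner_self_eq_norm_sq]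
  rw [e1, e2]
  set A := ‖a‖ with hA
  set B := ‖b‖ with hB
  have hA0 : 0 ≤ A := norm_nonneg a
  have hB0 : 0 ≤ B := norm_nonneg b
  have hAβ : 0 ≤ A ^ β := Real.rpow_nonneg hA0 β
  have hBβ : 0 ≤ B ^ β := Real.rpow_nonneg hB0 β
  rcases le_total A B with h | h
  · have hm : A ^ β ≤ B ^ β := Real.rpow_le_rpow hA0 h hβ
    nlinarith [mul_le_mul_of_nonneg_left hI hAβ, mul_le_mul_of_nonneg_left hI hBβ,
      mul_nonneg (sub_nonneg.2 h) (sub_nonneg.2 (mul_le_mul hm h hA0 hBβ))]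
  · have hm : B ^ β ≤ A ^ β := Real.rpow_le_rpow hB0 h hβ
    nlinarith [mul_le_mul_of_nonneg_left hI hAβ, mul_le_mul_of_nonneg_left hI hBβ,
      mul_nonneg (sub_nonneg.2 h) (sub_nonneg.2 (mul_le_mul hm h hB0 hAβ))]

theorem stmt5 (N : ℕ) [NeZero N] (β : ℝ) (hβ : 0 < β) (X : ℝ → ZMod N → ℂ)
    (hflow : ∀ t j, HasDerivAt (fun s => X s j) (flowRHS β (X t) j) t) (Q : ℂ) :
    ∀ s t : ℝ, s ≤ t →
      (∑ k, ‖X t k - Q‖ ^ (β + 2)) ^ (1 / (β + 2))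
        ≤ (∑ k, ‖X s k - Q‖ ^ (β + 2)) ^ (1 / (β + 2)) := by
  set F : ℝ → ℝ := fun t => ∑ k, ‖X t k - Q‖ ^ (β + 2) with hF
  have hderiv : ∀ t, HasDerivAt F
      (∑ k, (β + 2) * ‖X t k - Q‖ ^ β * ⟪flowRHS β (X t) k, X t k - Q⟫) t := by
    intro t
    apply HasDerivAt.fun_sum
    intro k _
    have hu : HasDerivAt (fun s => X s k - Q) (flowRHS β (X t) k) t :=
      (hflow t k).sub_const Q
    have := myHasDerivAt_norm_rpow hu (by linarith : (2:ℝ) ≤ β + 2)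
    simpa using this
  have hnonpos : ∀ t, (∑ k, (β + 2) * ‖X t k - Q‖ ^ β *
      ⟪flowRHS β (X t) k, X t k - Q⟫) ≤ 0 := by
    intro t
    set Y : ZMod N → ℂ := fun j => X t j - Q with hY
    have hYd : ∀ i j : ZMod N, X t i - X t j = Y i - Y j := by intro i j; simp [hY]
    have expand : ∀ k, (β + 2) * ‖X t k - Q‖ ^ β * ⟪flowRHS β (X t) k, X t k - Q⟫
        = (β + 2) * (‖Y (k+1) - Y k‖ ^ β * (‖Y k‖ ^ β * ⟪Y (k+1) - Y k, Y k⟫)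
            + ‖Y (k-1) - Y k‖ ^ β * (‖Y k‖ ^ β * ⟪Y (k-1) - Y k, Y k⟫)) := by
      intro k
      have : flowRHS β (X t) k
          = (‖Y (k+1) - Y k‖ ^ β : ℝ) • (Y (k+1) - Y k)
            + (‖Y (k-1) - Y k‖ ^ β : ℝ) • (Y (k-1) - Y k) := by
        simp only [flowRHS, ← hYd, Complex.real_smul]
      rw [this, inner_add_left, real_inner_smul_left, real_inner_smul_left]
      ring
    rw [Finset.sum_congr rfl (fun k _ => expand k), ← Finset.mul_sum, Finset.sum_add_distrib]
    have reindex : (∑ k : ZMod N, ‖Y (k-1) - Y k‖ ^ β * (‖Y k‖ ^ β * ⟪Y (k-1) - Y k, Y k⟫))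
        = ∑ k : ZMod N, ‖Y (k+1) - Y k‖ ^ β * (‖Y (k+1)‖ ^ β * ⟪Y k - Y (k+1), Y (k+1)⟫) := by
      apply Fintype.sum_equiv (Equiv.subRight (1 : ZMod N))
      intro k
      simp only [Equiv.subRight_apply]
      rw [sub_add_cancel, norm_sub_rev]
    rw [reindex, ← Finset.sum_add_distrib]
    apply mul_nonpos_of_nonneg_of_nonpos (by linarith)
    apply Finset.sum_nonpos
    intro k _
    have h1 : (0:ℝ) ≤ ‖Y (k+1) - Y k‖ ^ β := Real.rpow_nonneg (norm_nonneg _) β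
    have h2 : ‖Y k‖ ^ β * ⟪Y (k+1) - Y k, Y k⟫
        + ‖Y (k+1)‖ ^ β * ⟪Y k - Y (k+1), Y (k+1)⟫ ≤ 0 := pair_ineq hβ.le (Y k) (Y (k+1))
    calc ‖Y (k+1) - Y k‖ ^ β * (‖Y k‖ ^ β * ⟪Y (k+1) - Y k, Y k⟫)
          + ‖Y (k+1) - Y k‖ ^ β * (‖Y (k+1)‖ ^ β * ⟪Y k - Y (k+1), Y (k+1)⟫)
        = ‖Y (k+1) - Y k‖ ^ β * (‖Y k‖ ^ β * ⟪Y (k+1) - Y k, Y k⟫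
            + ‖Y (k+1)‖ ^ β * ⟪Y k - Y (k+1), Y (k+1)⟫) := by ring
      _ ≤ 0 := mul_nonpos_of_nonneg_of_nonpos h1 h2
  have hanti : Antitone F := by
    apply antitone_of_deriv_nonpos
    · exact fun t => (hderiv t).differentiableAt
    · intro t
      rw [(hderiv t).deriv]
      exact hnonpos t
  intro s t hst
  have hpos : 0 < β + 2 := by linarith
  exact Real.rpow_le_rpow
    (Finset.sum_nonneg fun k _ => Real.rpow_nonneg (norm_nonneg _) _)
    (hanti hst) (by positivity)
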